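/- Suppose |n⃗| = |m⃗|, F_{n⃗} is an |n⃗|-dimensional subspace of L²(ℝ), and F_{n⃗} ∩ G_{m⃗}⊥ = {0}. Then for every k = 1,…,p, the space F_{n⃗+e⃗ₖ} ∩ G_{m⃗}⊥ is one-dimensional, and for every nonzero Q = Σⱼ Aⱼ w₁ⱼ in this space the polynomial Aₖ has exact degree nₖ. -/

import Mathlib

open MeasureTheory Polynomial

/-- The space F_{n⃗}: the span in functions on ℝ of xʲ·w₁ₗ(x), 0 ≤ j ≤ nₗ−1. -/
noncomputable def mixedF {p : ℕ} (w1 : Fin p → ℝ → ℝ) (n : Fin p → ℕ) :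
    Submodule ℝ (ℝ → ℝ) :=
  Submodule.span ℝ {f | ∃ l : Fin p, ∃ j : ℕ, j < n l ∧ f = fun x => x ^ j * w1 l x}

/-- The "orthogonal complement of G_{m⃗}": functions Q such that Q·xʲ·w₂ₖ is
integrable with vanishing integral for 0 ≤ j ≤ mₖ−1, k = 1,…,q. -/
noncomputable def mixedGperp {q : ℕ} (w2 : Fin q → ℝ → ℝ) (m : Fin q → ℕ) :
    Submodule ℝ (ℝ → ℝ) where
  carrier := {Q | ∀ k : Fin q, ∀ j, j < m k →
    Integrable (fun x => Q x * (x ^ j * w2 k x)) ∧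
      (∫ x, Q x * (x ^ j * w2 k x)) = 0}
  zero_mem' := by
    intro k j hj
    constructor
    · simpa using (integrable_zero ℝ ℝ (volume : Measure ℝ))
    · simp
  add_mem' := by
    intro a b ha hb k j hj
    obtain ⟨hai, haz⟩ := ha k j hj
    obtain ⟨hbi, hbz⟩ := hb k j hj
    constructor
    · simp only [Pi.add_apply, add_mul]; exact hai.add hbi
    · have h : (fun x => (a + b) x * (x ^ j * w2 k x)) =
        fun x => a x * (x ^ j * w2 k x) + b x * (x ^ j * w2 k x) := by
        funext x; simp [add_mul]
      rw [h, integral_add hai hbi, haz, hbz, add_zero]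
  smul_mem' := by
    intro c a ha k j hj
    obtain ⟨hai, haz⟩ := ha k j hj
    have h : (fun x => (c • a) x * (x ^ j * w2 k x)) =
        fun x => c * (a x * (x ^ j * w2 k x)) := by
      funext x; simp [mul_assoc]
    constructor
    · rw [h]; exact hai.const_mul c
    · rw [h, integral_const_mul, haz, mul_zero]

/-- Q is a linear form of multiple orthogonal polynomials of mixed type for the
pair (n⃗, m⃗). -/
noncomputable def IsMixedForm {p q : ℕ} (w1 : Fin p → ℝ → ℝ) (w2 : Fin q → ℝ → ℝ)
    (n : Fin p → ℕ) (m : Fin q → ℕ) (Q : ℝ → ℝ) : Prop :=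
  (∃ A : Fin p → Polynomial ℝ, (∀ i, (A i).degree < (n i : ℕ)) ∧
     Q = fun x => ∑ i, (A i).eval x * w1 i x) ∧
  ∀ k : Fin q, ∀ j, j < m k → (∫ x, Q x * (x ^ j * w2 k x)) = 0

private lemma eval_eq_sum_fin {P : Polynomial ℝ} {n : ℕ} (h : P.degree < (n : ℕ)) (x : ℝ) :
    P.eval x = ∑ j : Fin n, P.coeff j * x ^ (j : ℕ) := by
  rw [Fin.sum_univ_eq_sum_range fun j => P.coeff j * x ^ j]
  rcases eq_or_ne P 0 with rfl | hP
  · simp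
  · exact Polynomial.eval_eq_sum_range' ((Polynomial.natDegree_lt_iff_degree_lt hP).mpr h) x

private lemma form_repr {p : ℕ} (w1 : Fin p → ℝ → ℝ) (n : Fin p → ℕ)
    (A : Fin p → Polynomial ℝ) (hA : ∀ i, (A i).degree < (n i : ℕ)) :
    (fun x => ∑ i, (A i).eval x * w1 i x) =
      ∑ s : Σ l : Fin p, Fin (n l),
        (A s.1).coeff s.2 • (fun x => x ^ (s.2 : ℕ) * w1 s.1 x) := by
  funext x
  simp only [Finset.sum_apply, Pi.smul_apply, smul_eq_mul]
  rw [← Finset.univ_sigma_univ, Finset.sum_sigma]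
  refine Finset.sum_congr rfl fun l _ => ?_
  rw [eval_eq_sum_fin (hA l), Finset.sum_mul]
  simp [mul_assoc]

private lemma form_mem {p : ℕ} (w1 : Fin p → ℝ → ℝ) (n : Fin p → ℕ)
    (A : Fin p → Polynomial ℝ) (hA : ∀ i, (A i).degree < (n i : ℕ)) :
    (fun x => ∑ i, (A i).eval x * w1 i x) ∈ mixedF w1 n := by
  rw [form_repr w1 n A hA]
  refine Submodule.sum_mem _ fun s _ => Submodule.smul_mem _ _ (Submodule.subset_span ?_)
  exact ⟨s.1, s.2, s.2.isLt, rfl⟩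

/-- The submodule of functions integrable against all the relevant moments. -/
private noncomputable def intSub {q : ℕ} (w2 : Fin q → ℝ → ℝ) (m : Fin q → ℕ) :
    Submodule ℝ (ℝ → ℝ) where
  carrier := {f | ∀ k : Fin q, ∀ j, j < m k →
    Integrable (fun x => f x * (x ^ j * w2 k x))}
  zero_mem' := by
    intro k j hj
    simpa using (integrable_zero ℝ ℝ (volume : Measure ℝ))
  add_mem' := by
    intro a b ha hb k j hj
    simp only [Pi.add_apply, add_mul]; exact (ha k j hj).add (hb k j hj)
  smul_mem' := by
    intro c a ha k j hj
    simpa [Pi.smul_apply, smul_eq_mul, mul_assoc] using ((ha k j hj).const_mul c)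

/-- Corollary 2.3(b): if |n⃗| = |m⃗|, F_{n⃗} is |n⃗|-dimensional,
F_{n⃗+e⃗ₖ} is (|n⃗|+1)-dimensional and F_{n⃗} ∩ G_{m⃗}⊥ = {0}, then
F_{n⃗+e⃗ₖ} ∩ G_{m⃗}⊥ is one-dimensional and for every nonzero Q = Σⱼ Aⱼ w₁ⱼ in
it, Aₖ has exact degree nₖ (type II normalization is possible). -/
theorem stmt13 (p q : ℕ) (w1 : Fin p → ℝ → ℝ) (w2 : Fin q → ℝ → ℝ)
    (n : Fin p → ℕ) (m : Fin q → ℕ) (k : Fin p)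
    (hInt : ∀ (l : Fin p) (j : ℕ), j < Function.update n k (n k + 1) l →
      ∀ (k' : Fin q) (i : ℕ), i < m k' →
      Integrable (fun x : ℝ => (x ^ j * w1 l x) * (x ^ i * w2 k' x)))
    (hdim : Module.finrank ℝ (mixedF w1 n) = ∑ i, n i)
    (hdim' : Module.finrank ℝ (mixedF w1 (Function.update n k (n k + 1))) = ∑ i, n i + 1)
    (hnm : ∑ i, n i = ∑ k', m k')
    (hbot : mixedF w1 n ⊓ mixedGperp w2 m = ⊥) :
    Module.finrank ℝ
      (mixedF w1 (Function.update n k (n k + 1)) ⊓ mixedGperp w2 m :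
        Submodule ℝ (ℝ → ℝ)) = 1 ∧
    ∀ A : Fin p → Polynomial ℝ,
      (∀ i, (A i).degree < (Function.update n k (n k + 1) i : ℕ)) →
      (fun x => ∑ i, (A i).eval x * w1 i x) ∈ mixedGperp w2 m →
      (¬ ∀ i, A i = 0) →
      (A k).degree = ((n k : ℕ) : WithBot ℕ) := by
  classical
  set n' : Fin p → ℕ := Function.update n k (n k + 1) with hn'
  -- the spanning family of F_{n'+e_k}
  set φ : (Σ l : Fin p, Fin (n' l)) → (ℝ → ℝ) :=
    fun s => fun x => x ^ (s.2 : ℕ) * w1 s.1 x with hφ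
  have hspan : Submodule.span ℝ (Set.range φ) = mixedF w1 n' := by
    unfold mixedF
    congr 1
    ext f
    constructor
    · rintro ⟨⟨l, j⟩, rfl⟩; exact ⟨l, j, j.isLt, rfl⟩
    · rintro ⟨l, j, hj, rfl⟩; exact ⟨⟨l, ⟨j, hj⟩⟩, rfl⟩
  have hsum' : ∑ l, n' l = ∑ i, n i + 1 := by
    rw [hn', Finset.sum_update_of_mem (Finset.mem_univ k),
      Finset.sum_eq_sum_sdiff_singleton_add (Finset.mem_univ k) n]
    omega
  have hcard : Fintype.card (Σ l : Fin p, Fin (n' l)) = ∑ i, n i + 1 := by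
    simp [Fintype.card_sigma, hsum']
  have hli : LinearIndependent ℝ φ := by
    rw [linearIndependent_iff_card_eq_finrank_span, hcard, Set.finrank, hspan, hdim']
  -- every element of F_{n'} is integrable against the moments
  have hle' : mixedF w1 n' ≤ intSub w2 m := by
    refine Submodule.span_le.mpr ?_
    rintro g ⟨l, j, hj, rfl⟩ k' i hi
    simpa using hInt l j hj k' i hi
  -- the moment map on F_{n'}
  obtain ⟨L, hL⟩ : ∃ L : (mixedF w1 n') →ₗ[ℝ] ((Σ k' : Fin q, Fin (m k')) → ℝ),
      ∀ Q s, L Q s = ∫ x, (Q : ℝ → ℝ) x * (x ^ (s.2 : ℕ) * w2 s.1 x) := by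
    refine ⟨{ toFun := fun Q s => ∫ x, (Q : ℝ → ℝ) x * (x ^ (s.2 : ℕ) * w2 s.1 x)
              map_add' := ?_, map_smul' := ?_ }, fun Q s => rfl⟩
    · intro a b
      funext s
      have ha := hle' a.2 s.1 s.2 s.2.isLt
      have hb := hle' b.2 s.1 s.2 s.2.isLt
      simp only [Submodule.coe_add, Pi.add_apply, add_mul]
      exact integral_add ha hb
    · intro c a
      funext s
      simp only [RingHom.id_apply, Pi.smul_apply, smul_eq_mul, SetLike.val_smul, mul_assoc]
      exact integral_const_mul c _
  haveI hFD' : FiniteDimensional ℝ (mixedF w1 n') := by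
    refine FiniteDimensional.of_finrank_pos ?_
    rw [hdim']; omega
  have hFle : mixedF w1 n ≤ mixedF w1 n' := by
    refine Submodule.span_mono ?_
    rintro g ⟨l, j, hj, rfl⟩
    refine ⟨l, j, ?_, rfl⟩
    rcases eq_or_ne l k with rfl | hl
    · simp only [hn', Function.update_self]; omega
    · simpa [hn', Function.update_of_ne hl] using hj
  set K : Submodule ℝ (ℝ → ℝ) := mixedF w1 n' ⊓ mixedGperp w2 m with hK
  haveI : FiniteDimensional ℝ K :=
    Submodule.finiteDimensional_of_le (le_trans (le_of_eq hK) inf_le_left)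
  haveI : FiniteDimensional ℝ (mixedF w1 n) := Submodule.finiteDimensional_of_le hFle
  -- upper bound
  have hFKbot : mixedF w1 n ⊓ K = ⊥ :=
    le_bot_iff.mp (le_trans (inf_le_inf_left _ inf_le_right) hbot.le)
  have hup : Module.finrank ℝ K ≤ 1 := by
    have hsup := Submodule.finrank_sup_add_finrank_inf_eq (mixedF w1 n) K
    rw [hFKbot] at hsup
    have h0 : Module.finrank ℝ (⊥ : Submodule ℝ (ℝ → ℝ)) = 0 := finrank_bot ℝ (ℝ → ℝ)
    have hle2 : Module.finrank ℝ ↥(mixedF w1 n ⊔ K) ≤ Module.finrank ℝ ↥(mixedF w1 n') :=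
      Submodule.finrank_mono (sup_le hFle (le_trans (le_of_eq hK) inf_le_left))
    rw [hdim'] at hle2
    omega
  -- lower bound via rank-nullity
  have hrn := LinearMap.finrank_range_add_finrank_ker L
  have hcardσ : Fintype.card (Σ k' : Fin q, Fin (m k')) = ∑ i, n i := by
    simp [Fintype.card_sigma, hnm]
  have hrle : Module.finrank ℝ (LinearMap.range L) ≤ ∑ i, n i := by
    have h1 := Submodule.finrank_le (LinearMap.range L)
    rwa [Module.finrank_fintype_fun_eq_card, hcardσ] at h1
  have hker : 0 < Module.finrank ℝ (LinearMap.ker L) := by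
    rw [hdim'] at hrn; omega
  haveI : FiniteDimensional ℝ (LinearMap.ker L) :=
    FiniteDimensional.finiteDimensional_submodule (LinearMap.ker L)
  haveI : Nontrivial (LinearMap.ker L) := Module.finrank_pos_iff.mp hker
  obtain ⟨q0, hq0⟩ := exists_ne (0 : LinearMap.ker L)
  have hq0G : ((q0 : mixedF w1 n') : ℝ → ℝ) ∈ mixedGperp w2 m := by
    intro k' j hj
    refine ⟨hle' (q0 : mixedF w1 n').2 k' j hj, ?_⟩
    have h1 := congrFun (LinearMap.mem_ker.mp q0.2) ⟨k', ⟨j, hj⟩⟩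
    rw [hL] at h1
    simpa using h1
  have hKel : ((q0 : mixedF w1 n') : ℝ → ℝ) ∈ K := ⟨(q0 : mixedF w1 n').2, hq0G⟩
  have hlow : 0 < Module.finrank ℝ K := by
    refine Module.finrank_pos_iff.mpr ⟨⟨⟨_, hKel⟩, 0, ?_⟩⟩
    simp only [ne_eq, Submodule.mk_eq_zero]
    intro h
    exact hq0 (Subtype.ext (Subtype.ext h))
  refine ⟨by omega, ?_⟩
  -- second part
  intro A hA hQG hA0
  have hA' : ∀ i, (A i).degree < ((n' i : ℕ) : WithBot ℕ) := hA
  by_contra hdeg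
  have hAk : (A k).degree < ((n k : ℕ) : WithBot ℕ) := by
    have h1 : (A k).degree < ((n k + 1 : ℕ) : WithBot ℕ) := by
      simpa [hn', Function.update_self] using hA k
    rcases eq_or_ne (A k) 0 with h0 | h0
    · rw [h0, Polynomial.degree_zero]; exact WithBot.bot_lt_coe _
    · rw [← Polynomial.natDegree_lt_iff_degree_lt h0] at h1 ⊢
      have hne : (A k).natDegree ≠ n k := fun h =>
        hdeg (by rw [Polynomial.degree_eq_natDegree h0, h])
      omega
  have hAn : ∀ i, (A i).degree < ((n i : ℕ) : WithBot ℕ) := by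
    intro i
    rcases eq_or_ne i k with rfl | hi
    · exact hAk
    · simpa [hn', Function.update_of_ne hi] using hA i
  have hQF : (fun x => ∑ i, (A i).eval x * w1 i x) ∈ mixedF w1 n := form_mem w1 n A hAn
  have hQ0 : (fun x : ℝ => ∑ i, (A i).eval x * w1 i x) = 0 := by
    have hmem : (fun x : ℝ => ∑ i, (A i).eval x * w1 i x) ∈ (⊥ : Submodule ℝ (ℝ → ℝ)) :=
      hbot ▸ ⟨hQF, hQG⟩
    simpa [Submodule.mem_bot] using hmem
  have hzero : ∑ s : Σ l : Fin p, Fin (n' l), (A s.1).coeff s.2 • φ s = 0 := by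
    rw [hφ, ← form_repr w1 n' A hA', hQ0]
  have hc := Fintype.linearIndependent_iff.mp hli (fun s => (A s.1).coeff s.2) hzero
  refine hA0 fun i => ?_
  ext j
  simp only [Polynomial.coeff_zero]
  by_cases hj : j < n' i
  · exact hc ⟨i, ⟨j, hj⟩⟩
  · exact Polynomial.coeff_eq_zero_of_degree_lt
      (lt_of_lt_of_le (hA' i) (Nat.cast_le.mpr (not_lt.mp hj)))
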